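/- Let π be a group, R a commutative ring, A = R[π], and ∂ : A → A a left Fox derivative. Writing ∂(x) = Σ_{a∈π} (x/a)_∂ · a for x ∈ π (with (x/a)_∂ ∈ R, finitely many nonzero), define the R-linear map Δ_∂ : A → A by Δ_∂(x) = Σ_{a∈π} (x/a)_∂ · a⁻¹ x a for x ∈ π. Then Δ_∂(xy) = Δ_∂(yx) for all x, y ∈ π; consequently Δ_∂ vanishes on the submodule A' spanned by commutators, and induces a linear map Ǎ = A/A' → A. -/

import Mathlib

open MonoidAlgebra Finsupp

lemma aux_of_mul (R : Type*) [CommRing R] (G : Type*) [Group G] (x : G)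
    (g : MonoidAlgebra R G) :
    (MonoidAlgebra.of R G x * g).coeff = Finsupp.mapDomain (fun b => x * b) g.coeff := by
  rw [MonoidAlgebra.of_apply, MonoidAlgebra.mul_def, MonoidAlgebra.coeff_single, Finsupp.sum_single_index]
  · simp [Finsupp.mapDomain, MonoidAlgebra.coeff_finsuppSum]
  · simp

theorem stmt6 (R : Type*) [CommRing R] (G : Type*) [Group G]
    (D : MonoidAlgebra R G →ₗ[R] MonoidAlgebra R G)
    (hFox : ∀ x y : G,
      D (MonoidAlgebra.of R G x * MonoidAlgebra.of R G y)
        = D (MonoidAlgebra.of R G x) + MonoidAlgebra.of R G x * D (MonoidAlgebra.of R G y))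
    (Δ : MonoidAlgebra R G →ₗ[R] MonoidAlgebra R G)
    (hΔ : ∀ x : G, Δ (MonoidAlgebra.of R G x)
        = (D (MonoidAlgebra.of R G x)).coeff.sum
            (fun a r => r • MonoidAlgebra.of R G (a⁻¹ * x * a)))
    (A' : Submodule R (MonoidAlgebra R G))
    (hA' : A' = Submodule.span R
      {z : MonoidAlgebra R G | ∃ u v : MonoidAlgebra R G, z = u * v - v * u}) :
    (∀ x y : G,
      Δ (MonoidAlgebra.of R G x * MonoidAlgebra.of R G y)
        = Δ (MonoidAlgebra.of R G y * MonoidAlgebra.of R G x)) ∧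
    (∀ a ∈ A', Δ a = 0) ∧
    ∃ Δbar : (MonoidAlgebra R G ⧸ A') →ₗ[R] MonoidAlgebra R G,
      ∀ a : MonoidAlgebra R G, Δbar (Submodule.Quotient.mk a) = Δ a := by
  have expand : ∀ x y : G, Δ (MonoidAlgebra.of R G x * MonoidAlgebra.of R G y)
      = (D (MonoidAlgebra.of R G x)).coeff.sum
          (fun a r => r • MonoidAlgebra.of R G (a⁻¹ * (x * y) * a))
        + (D (MonoidAlgebra.of R G y)).coeff.sum
          (fun b r => r • MonoidAlgebra.of R G (b⁻¹ * (y * x) * b)) := by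
    intro x y
    rw [← map_mul (MonoidAlgebra.of R G), hΔ, map_mul, hFox, MonoidAlgebra.coeff_add,
      Finsupp.sum_add_index' (by simp) (by intro a r s; rw [add_smul]),
      aux_of_mul, Finsupp.sum_mapDomain_index (by simp) (by intro a r s; rw [add_smul])]
    congr 1
    apply Finsupp.sum_congr
    intro b _
    congr 2
    group
  have key1 : ∀ x y : G, Δ (MonoidAlgebra.of R G x * MonoidAlgebra.of R G y)
      = Δ (MonoidAlgebra.of R G y * MonoidAlgebra.of R G x) := by
    intro x y
    rw [expand x y, expand y x, add_comm]
  have key2 : ∀ u v : MonoidAlgebra R G, Δ (u * v) = Δ (v * u) := by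
    intro u v
    rw [MonoidAlgebra.mul_def, MonoidAlgebra.mul_def]
    simp_rw [map_finsuppSum]
    rw [Finsupp.sum_comm v.coeff u.coeff]
    apply Finsupp.sum_congr
    intro a _
    apply Finsupp.sum_congr
    intro b _
    have h1 : (MonoidAlgebra.single (a * b) (u.coeff a * v.coeff b) : MonoidAlgebra R G)
        = (u.coeff a * v.coeff b) • (MonoidAlgebra.of R G a * MonoidAlgebra.of R G b) := by
      rw [← map_mul, MonoidAlgebra.of_apply, MonoidAlgebra.smul_single, smul_eq_mul, mul_one]
    have h2 : (MonoidAlgebra.single (b * a) (v.coeff b * u.coeff a) : MonoidAlgebra R G)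
        = (v.coeff b * u.coeff a) • (MonoidAlgebra.of R G b * MonoidAlgebra.of R G a) := by
      rw [← map_mul, MonoidAlgebra.of_apply, MonoidAlgebra.smul_single, smul_eq_mul, mul_one]
    rw [h1, h2, map_smul, map_smul, key1 a b, mul_comm (u.coeff a) (v.coeff b)]
  have key3 : ∀ a ∈ A', Δ a = 0 := by
    intro a ha
    rw [hA'] at ha
    induction ha using Submodule.span_induction with
    | mem z hz =>
      obtain ⟨u, v, rfl⟩ := hz
      rw [map_sub, key2, sub_self]
    | zero => exact map_zero Δ
    | add x y _ _ hx hy => rw [map_add, hx, hy, add_zero]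
    | smul r x _ hx => rw [map_smul, hx, smul_zero]
  refine ⟨key1, key3, A'.liftQ Δ (fun a ha => key3 a ha), fun a => rfl⟩
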